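/- Let $u:\mathbb{T}^2\times[-1,1]\to\mathbb{R}^3$ be a $C^1$ vector field and $f:\mathbb{T}^2\to(-1,1)$ a $C^2$ function. For $x'\in\mathbb{T}^2$ let $\vN(x')=(-\partial_1 f, -\partial_2 f, 1)$ and denote by $\underline{u}(x')=u(x',f(x'))$ the trace of $u$ on the graph of $f$. Then at each point of the graph, $\big((u\cdot\nabla)u\big)\cdot\vN - (\partial_3 u\cdot\vN)(u\cdot\vN) = \underline{u}_1\partial_1(\underline{u}\cdot\vN) + \underline{u}_2\partial_2(\underline{u}\cdot\vN) + \sum_{i,j=1}^2 \underline{u}_i\underline{u}_j\partial_i\partial_j f$, where on the right-hand side $\partial_i$ denotes the tangential derivative of the trace, $\partial_i\underline{g}(x')=\partial_i g(x',f(x'))+\partial_3 g(x',f(x'))\partial_i f(x')$. -/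

import Mathlib

open Finset

/-- Partial derivative in the `i`-th coordinate direction. -/
noncomputable def pd {n : ℕ} (i : Fin n) (g : (Fin n → ℝ) → ℝ) (x : Fin n → ℝ) : ℝ :=
  fderiv ℝ g x (Pi.single i 1)

noncomputable def Emb (f : (Fin 2 → ℝ) → ℝ) : (Fin 2 → ℝ) → Fin 3 → ℝ := fun y => ![y 0, y 1, f y]

noncomputable def Lmap (f : (Fin 2 → ℝ) → ℝ) (x' : Fin 2 → ℝ) : (Fin 2 → ℝ) →L[ℝ] (Fin 3 → ℝ) :=
  ContinuousLinearMap.pi ![ContinuousLinearMap.proj 0, ContinuousLinearMap.proj 1, fderiv ℝ f x']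

lemma hasFDerivAt_Emb (f : (Fin 2 → ℝ) → ℝ) (x' : Fin 2 → ℝ) (hf : DifferentiableAt ℝ f x') :
    HasFDerivAt (Emb f) (Lmap f x') x' := by
  rw [hasFDerivAt_pi']
  intro j
  fin_cases j
  · simpa [Emb, Lmap, ContinuousLinearMap.proj_pi] using
      hasFDerivAt_apply (𝕜 := ℝ) (F' := fun _ : Fin 2 => ℝ) 0 x'
  · simpa [Emb, Lmap, ContinuousLinearMap.proj_pi] using
      hasFDerivAt_apply (𝕜 := ℝ) (F' := fun _ : Fin 2 => ℝ) 1 x'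
  · simpa [Emb, Lmap, ContinuousLinearMap.proj_pi] using hf.hasFDerivAt

lemma Lmap_single (f : (Fin 2 → ℝ) → ℝ) (x' : Fin 2 → ℝ) (i : Fin 2) :
    Lmap f x' (Pi.single i 1) =
      (Pi.single (i.castSucc) (1:ℝ) : Fin 3 → ℝ)
        + (pd i f x') • (Pi.single (2 : Fin 3) (1:ℝ) : Fin 3 → ℝ) := by
  funext j
  fin_cases i <;> fin_cases j <;>
    simp [Lmap, pd, Pi.single_apply, Fin.ext_iff]

lemma pd_trace (u : (Fin 3 → ℝ) → Fin 3 → ℝ) (f : (Fin 2 → ℝ) → ℝ)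
    (hu : ContDiff ℝ 1 u) (k : Fin 3) (i : Fin 2)
    (x' : Fin 2 → ℝ) (hfx : DifferentiableAt ℝ f x') :
    pd i (fun y => u (Emb f y) k) x'
      = pd i.castSucc (fun z => u z k) (Emb f x')
        + pd 2 (fun z => u z k) (Emb f x') * pd i f x' := by
  have huk : DifferentiableAt ℝ (fun z => u z k) (Emb f x') := by
    have := (hu.differentiable one_ne_zero).differentiableAt (x := Emb f x')
    exact (differentiableAt_pi.1 this) k
  have h : HasFDerivAt (fun y => u (Emb f y) k)
      ((fderiv ℝ (fun z => u z k) (Emb f x')).comp (Lmap f x')) x' :=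
    huk.hasFDerivAt.comp x' (hasFDerivAt_Emb f x' hfx)
  rw [pd, h.fderiv, ContinuousLinearMap.comp_apply, Lmap_single, map_add, map_smul]
  simp [pd, smul_eq_mul, mul_comm]

lemma pd_add' {g h : (Fin 2 → ℝ) → ℝ} {x : Fin 2 → ℝ} (i : Fin 2)
    (hg : DifferentiableAt ℝ g x) (hh : DifferentiableAt ℝ h x) :
    pd i (fun y => g y + h y) x = pd i g x + pd i h x := by
  rw [pd, fderiv_fun_add hg hh]; simp [pd]

lemma pd_mul' {g h : (Fin 2 → ℝ) → ℝ} {x : Fin 2 → ℝ} (i : Fin 2)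
    (hg : DifferentiableAt ℝ g x) (hh : DifferentiableAt ℝ h x) :
    pd i (fun y => g y * h y) x = pd i g x * h x + g x * pd i h x := by
  rw [pd, fderiv_fun_mul hg hh]; simp [pd]; ring

lemma pd_neg' {g : (Fin 2 → ℝ) → ℝ} {x : Fin 2 → ℝ} (i : Fin 2) :
    pd i (fun y => -g y) x = -pd i g x := by
  rw [pd, fderiv_fun_neg]; simp [pd]

lemma pdf_diff {f : (Fin 2 → ℝ) → ℝ} (hf : ContDiff ℝ 2 f) (j : Fin 2) :
    Differentiable ℝ (pd j f) := by
  have h1 : ContDiff ℝ 1 (fderiv ℝ f) := hf.fderiv_right (by norm_num)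
  have : ContDiff ℝ 1 (fun y => fderiv ℝ f y (Pi.single j 1)) :=
    h1.clm_apply contDiff_const
  exact this.differentiable one_ne_zero

/-- Lemma 3.1: pointwise identity relating the normal component of the convective
derivative on the interface `{x₃ = f(x')}` to tangential derivatives of the
scaled normal velocity `θ = ū·N`. -/
theorem convective_normal_identity
    (u : (Fin 3 → ℝ) → Fin 3 → ℝ) (f : (Fin 2 → ℝ) → ℝ)
    (hu : ContDiff ℝ 1 u) (hf : ContDiff ℝ 2 f)
    (emb : (Fin 2 → ℝ) → Fin 3 → ℝ)
    (hemb : ∀ x', emb x' = ![x' 0, x' 1, f x'])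
    (N : (Fin 2 → ℝ) → Fin 3 → ℝ)
    (hN : ∀ x', N x' = ![-(pd 0 f x'), -(pd 1 f x'), 1])
    (ub : (Fin 2 → ℝ) → Fin 3 → ℝ) (hub : ∀ x' i, ub x' i = u (emb x') i)
    (θ : (Fin 2 → ℝ) → ℝ) (hθ : ∀ x', θ x' = ∑ i, ub x' i * N x' i)
    (x' : Fin 2 → ℝ) :
    (∑ i, (∑ k, u (emb x') k * pd k (fun y => u y i) (emb x')) * N x' i)
      - (∑ i, pd 2 (fun y => u y i) (emb x') * N x' i) * (∑ i, u (emb x') i * N x' i)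
    = ub x' 0 * pd 0 θ x' + ub x' 1 * pd 1 θ x'
      + ∑ i : Fin 2, ∑ j : Fin 2,
          ub x' i.castSucc * ub x' j.castSucc * pd i (pd j f) x' := by
  have hfd : Differentiable ℝ f := hf.differentiable (by norm_num)
  have htr : ∀ (k : Fin 3) (y : Fin 2 → ℝ),
      DifferentiableAt ℝ (fun z => u (Emb f z) k) y := by
    intro k y
    exact ((differentiableAt_pi.1 ((hu.differentiable one_ne_zero) (Emb f y))) k).comp y
      (hasFDerivAt_Emb f y (hfd y)).differentiableAt
  have hθfun : θ = fun y => u (Emb f y) 0 * (-(pd 0 f y))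
      + u (Emb f y) 1 * (-(pd 1 f y)) + u (Emb f y) 2 * 1 := by
    funext y
    rw [hθ]
    simp [hub, hN, hemb, Emb, Fin.sum_univ_three]
  have key : ∀ i : Fin 2, pd i θ x' =
      ((pd i.castSucc (fun z => u z 0) (Emb f x')
          + pd 2 (fun z => u z 0) (Emb f x') * pd i f x') * (-(pd 0 f x'))
        + u (Emb f x') 0 * (-(pd i (pd 0 f) x')))
      + ((pd i.castSucc (fun z => u z 1) (Emb f x')
          + pd 2 (fun z => u z 1) (Emb f x') * pd i f x') * (-(pd 1 f x'))
        + u (Emb f x') 1 * (-(pd i (pd 1 f) x')))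
      + ((pd i.castSucc (fun z => u z 2) (Emb f x')
          + pd 2 (fun z => u z 2) (Emb f x') * pd i f x') * 1
        + u (Emb f x') 2 * 0) := by
    intro i
    have d0 : DifferentiableAt ℝ (fun y => -(pd 0 f y)) x' := ((pdf_diff hf 0) x').neg
    have d1 : DifferentiableAt ℝ (fun y => -(pd 1 f y)) x' := ((pdf_diff hf 1) x').neg
    rw [hθfun]
    rw [pd_add' i (((htr 0 x').fun_mul d0).fun_add ((htr 1 x').fun_mul d1)) ((htr 2 x').fun_mul (differentiableAt_const 1)),
        pd_add' i ((htr 0 x').fun_mul d0) ((htr 1 x').fun_mul d1),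
        pd_mul' i (htr 0 x') d0, pd_mul' i (htr 1 x') d1,
        pd_mul' i (htr 2 x') (differentiableAt_const 1),
        pd_neg' i, pd_neg' i,
        pd_trace u f hu 0 i x' (hfd x'), pd_trace u f hu 1 i x' (hfd x'),
        pd_trace u f hu 2 i x' (hfd x')]
    have hc : pd i (fun _ : Fin 2 → ℝ => (1:ℝ)) x' = 0 := by
      rw [pd, fderiv_fun_const]; simp
    rw [hc]
  have hE : emb x' = Emb f x' := by rw [hemb]; rfl
  simp only [hE, Fin.sum_univ_three, Fin.sum_univ_two, hN, hub, hθ,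
    Matrix.cons_val_zero, Matrix.cons_val_one, Matrix.head_cons,
    Matrix.cons_val_two, Matrix.tail_cons, key 0, key 1,
    Fin.castSucc_zero, Fin.castSucc_one, Fin.isValue]
  ring
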